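/- Let G = (V,E) be a finite simple graph with |V| = n and let 1/3 ≤ α ≤ 1. Let v₁, v₂, …, vₙ be an enumeration of V with d(v₁) ≥ d(v₂) ≥ … ≥ d(vₙ). For a k-element set C = {v_{i₁}, …, v_{i_k}} with i₁ < … < i_k, identify C with the increasing index sequence (i₁, …, i_k). Suppose C is a k-element subset of V that maximizes cov_α among all k-element subsets, and that C is lexicographically smallest (with respect to these index sequences) among all such maximizers. Let v_j be the element of C of largest index, i.e., j = i_k. Then C is a dominating set of the induced subgraph G[{v₁, …, v_j}]: every vertex v_i with 1 ≤ i ≤ j is in C or has a neighbor in C. -/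

import Mathlib

open Finset

/-- Number of edges of `G` with both endpoints in `X`. -/
noncomputable def mIn {V : Type*} (G : SimpleGraph V) (X : Finset V) : ℕ :=
  {e ∈ G.edgeSet | ∀ v ∈ e, v ∈ X}.ncard

/-- Number of edges of `G` with one endpoint in `X` and the other in `Y`. -/
noncomputable def mBtw {V : Type*} (G : SimpleGraph V) (X Y : Finset V) : ℕ :=
  {e ∈ G.edgeSet | ∃ u ∈ X, ∃ w ∈ Y, e = s(u, w)}.ncard

/-- `cov_α(S) = (1-α)·m(S) + α·m(S, V∖S)`. -/
noncomputable def cov {V : Type*} [Fintype V] [DecidableEq V] (G : SimpleGraph V) (α : ℝ)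
    (S : Finset V) : ℝ :=
  (1 - α) * mIn G S + α * mBtw G S Sᶜ

section Aux

lemma lex_helper {α : Type*} [LinearOrder α] (l₁ : List α) :
    ∀ (l₂ : List α), l₁.Pairwise (· < ·) → l₂.Pairwise (· < ·) →
      l₁.length = l₂.length → ∀ x, x ∈ l₁ → x ∉ l₂ →
      (∀ y, y < x → (y ∈ l₁ ↔ y ∈ l₂)) → List.Lex (· < ·) l₁ l₂ := by
  induction l₁ with
  | nil => intro l₂ _ _ _ x hx; simp at hx
  | cons a t ih =>
    intro l₂ hs₁ hs₂ hlen x hx hx₂ hmin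
    cases l₂ with
    | nil => simp at hlen
    | cons b t₂ =>
      rcases lt_trichotomy a b with hab | hab | hab
      · exact List.Lex.rel hab
      · subst hab
        have hxa : x ≠ a := fun h => hx₂ (h ▸ (List.mem_cons_self : a ∈ a :: t₂))
        have hxt : x ∈ t := (List.mem_cons.mp hx).resolve_left hxa
        refine List.Lex.cons (ih t₂ hs₁.of_cons hs₂.of_cons (by simpa using hlen) x hxt
          (fun h => hx₂ (List.mem_cons_of_mem _ h)) fun y hy => ?_)
        constructor
        · intro hyt
          have := (hmin y hy).mp (List.mem_cons_of_mem _ hyt)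
          rcases List.mem_cons.mp this with h | h
          · exact absurd (h ▸ hyt) (fun hat => lt_irrefl a (List.rel_of_pairwise_cons hs₁ hat))
          · exact h
        · intro hyt
          have := (hmin y hy).mpr (List.mem_cons_of_mem _ hyt)
          rcases List.mem_cons.mp this with h | h
          · exact absurd (h ▸ hyt) (fun hat => lt_irrefl a (List.rel_of_pairwise_cons hs₂ hat))
          · exact h
      · exfalso
        have hax : a ≤ x := by
          rcases List.mem_cons.mp hx with h | h
          · exact h.ge
          · exact (List.rel_of_pairwise_cons hs₁ h).le
        have hb : b ∈ a :: t := (hmin b (lt_of_lt_of_le hab hax)).mpr ((List.mem_cons_self : b ∈ b :: t₂))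
        rcases List.mem_cons.mp hb with h | h
        · exact absurd h hab.ne
        · exact absurd (List.rel_of_pairwise_cons hs₁ h) (not_lt.mpr hab.le)

variable {V : Type*} [Fintype V] [DecidableEq V] (G : SimpleGraph V) [DecidableRel G.Adj]

lemma mIn_eq_card (S : Finset V) :
    mIn G S = (G.edgeFinset.filter (fun e => ∀ v ∈ e, v ∈ S)).card := by
  rw [mIn, show {e ∈ G.edgeSet | ∀ v ∈ e, v ∈ S} =
    ↑(G.edgeFinset.filter (fun e => ∀ v ∈ e, v ∈ S)) by
      ext e; simp [SimpleGraph.mem_edgeFinset]]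
  exact Set.ncard_coe_finset _

lemma mBtw_eq_card (S : Finset V) :
    mBtw G S Sᶜ = (G.edgeFinset.filter
      (fun e => (∃ v ∈ e, v ∈ S) ∧ ¬ ∀ v ∈ e, v ∈ S)).card := by
  rw [mBtw, show {e ∈ G.edgeSet | ∃ u ∈ S, ∃ w ∈ Sᶜ, e = s(u, w)} =
    ↑(G.edgeFinset.filter (fun e => (∃ v ∈ e, v ∈ S) ∧ ¬ ∀ v ∈ e, v ∈ S)) by
      ext e
      simp only [Set.mem_setOf_eq, coe_filter, SimpleGraph.mem_edgeFinset, Finset.mem_compl]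
      refine and_congr_right fun he => ?_
      induction e with
      | _ a b =>
        have hab : a ≠ b := (G.ne_of_adj he)
        constructor
        · rintro ⟨u, hu, w, hw, h⟩
          rw [Sym2.eq_iff] at h
          rcases h with ⟨rfl, rfl⟩ | ⟨rfl, rfl⟩
          · exact ⟨⟨a, by simp, hu⟩, fun h => hw (h b (by simp))⟩
          · exact ⟨⟨b, by simp, hu⟩, fun h => hw (h a (by simp))⟩
        · rintro ⟨⟨v, hv, hvS⟩, hnot⟩
          simp only [Sym2.mem_iff] at hv
          push_neg at hnot
          obtain ⟨w, hw, hwS⟩ := hnot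
          simp only [Sym2.mem_iff] at hw
          rcases hv with rfl | rfl
          · rcases hw with rfl | rfl
            · exact absurd hvS hwS
            · exact ⟨v, hvS, w, hwS, rfl⟩
          · rcases hw with rfl | rfl
            · exact ⟨v, hvS, w, hwS, Sym2.eq_swap⟩
            · exact absurd hvS hwS]
  exact Set.ncard_coe_finset _

omit [Fintype V] [DecidableRel G.Adj] in
lemma card_filter_mem_sym2 {a b : V} (hab : a ≠ b) (S : Finset V) :
    (S.filter (fun v => v ∈ s(a,b))).card
      = (if a ∈ S then 1 else 0) + (if b ∈ S then 1 else 0) := by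
  simp only [Sym2.mem_iff]
  rw [Finset.filter_or, Finset.filter_eq', Finset.filter_eq']
  split_ifs with h1 h2 h2
  · rw [Finset.card_union_of_disjoint (by simp [hab, hab.symm])]; simp
  · simp
  · simp
  · simp

lemma handshake (S : Finset V) :
    ∑ v ∈ S, G.degree v = 2 * mIn G S + mBtw G S Sᶜ := by
  rw [mIn_eq_card, mBtw_eq_card]
  have step1 : ∑ v ∈ S, G.degree v
      = ∑ e ∈ G.edgeFinset, (S.filter (fun v => v ∈ e)).card := by
    have : ∀ v ∈ S, G.degree v = (G.edgeFinset.filter (fun e => v ∈ e)).card := by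
      intro v _
      rw [← SimpleGraph.card_incidenceFinset_eq_degree, SimpleGraph.incidenceFinset_eq_filter]
    rw [Finset.sum_congr rfl this]
    simp only [Finset.card_filter]
    exact Finset.sum_comm
  rw [step1, ← Finset.sum_filter_add_sum_filter_not G.edgeFinset (fun e => ∀ v ∈ e, v ∈ S)]
  congr 1
  · rw [Finset.sum_congr rfl (g := fun _ => 2), Finset.sum_const, smul_eq_mul, mul_comm]
    intro e he
    rw [Finset.mem_filter] at he
    obtain ⟨he, hall⟩ := he
    rw [SimpleGraph.mem_edgeFinset] at he
    induction e with
    | _ a b =>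
      rw [card_filter_mem_sym2 (G.ne_of_adj he), if_pos (hall a (by simp)),
        if_pos (hall b (by simp))]
  · rw [← Finset.sum_filter_add_sum_filter_not
      (G.edgeFinset.filter (fun e => ¬ ∀ v ∈ e, v ∈ S)) (fun e => ∃ v ∈ e, v ∈ S)]
    have h0 : ∑ e ∈ (G.edgeFinset.filter (fun e => ¬ ∀ v ∈ e, v ∈ S)).filter
        (fun e => ¬ ∃ v ∈ e, v ∈ S), (S.filter (fun v => v ∈ e)).card = 0 := by
      apply Finset.sum_eq_zero
      intro e he
      simp only [Finset.mem_filter] at he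
      rw [Finset.card_eq_zero, Finset.filter_eq_empty_iff]
      intro v hv h
      exact he.2 ⟨v, h, hv⟩
    rw [h0, add_zero]
    rw [Finset.filter_filter]
    have hcongr : (G.edgeFinset.filter (fun e => (¬ ∀ v ∈ e, v ∈ S) ∧ ∃ v ∈ e, v ∈ S))
        = (G.edgeFinset.filter (fun e => (∃ v ∈ e, v ∈ S) ∧ ¬ ∀ v ∈ e, v ∈ S)) := by
      apply Finset.filter_congr; intro e _; exact and_comm
    rw [hcongr]
    rw [Finset.sum_congr rfl (g := fun _ => 1), Finset.sum_const, smul_eq_mul, mul_one]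
    intro e he
    rw [Finset.mem_filter] at he
    obtain ⟨he', hex, hnall⟩ := he
    rw [SimpleGraph.mem_edgeFinset] at he'
    induction e with
    | _ a b =>
      push_neg at hnall
      obtain ⟨w, hw, hwS⟩ := hnall
      obtain ⟨v, hv, hvS⟩ := hex
      simp only [Sym2.mem_iff] at hw hv
      rw [card_filter_mem_sym2 (G.ne_of_adj he')]
      rcases hv with rfl | rfl <;> rcases hw with rfl | rfl <;>
        first
          | exact absurd hvS hwS
          | simp [hvS, hwS]

lemma cov_eq (α : ℝ) (S : Finset V) :
    cov G α S = α * (∑ v ∈ S, G.degree v) + (1 - 3 * α) * mIn G S := by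
  have h := handshake G S
  have h' : ((∑ v ∈ S, G.degree v : ℕ) : ℝ) = 2 * mIn G S + mBtw G S Sᶜ := by
    exact_mod_cast congrArg (Nat.cast : ℕ → ℝ) h
  rw [cov]
  push_cast at h' ⊢
  linear_combination (-α) * h'

lemma mIn_mono {S T : Finset V} (h : S ⊆ T) : mIn G S ≤ mIn G T := by
  rw [mIn_eq_card, mIn_eq_card]
  exact Finset.card_le_card (Finset.monotone_filter_right _
    (fun e _ hall v hv => h (hall v hv)))

lemma mIn_insert_no_adj {S : Finset V} {v : V} (hv : v ∉ S)
    (hadj : ∀ u ∈ S, ¬ G.Adj v u) : mIn G (insert v S) = mIn G S := by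
  rw [mIn_eq_card, mIn_eq_card]
  congr 1
  apply Finset.filter_congr
  intro e he
  rw [SimpleGraph.mem_edgeFinset] at he
  induction e with
  | _ a b =>
    have hab : a ≠ b := G.ne_of_adj he
    constructor
    · intro hall w hw
      have h' := hall w hw
      rcases Finset.mem_insert.mp h' with rfl | h'
      · -- w = v; derive contradiction: the other endpoint is adjacent to v and in S
        exfalso
        simp only [Sym2.mem_iff] at hw
        rcases hw with rfl | rfl
        · have hb := hall b (by simp)
          rcases Finset.mem_insert.mp hb with h | h
          · exact hab h.symm
          · exact hadj b h he
        · have ha := hall a (by simp)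
          rcases Finset.mem_insert.mp ha with h | h
          · exact hab h
          · exact hadj a h he.symm
      · exact h'
    · intro hall w hw
      exact Finset.mem_insert_of_mem (hall w hw)

end Aux

theorem stmt16 {V : Type*} [Fintype V] [DecidableEq V] (G : SimpleGraph V)
    [DecidableRel G.Adj] (α : ℝ) (hα0 : 1 / 3 ≤ α) (hα1 : α ≤ 1)
    (e : Fin (Fintype.card V) ≃ V)
    (hsorted : ∀ i j : Fin (Fintype.card V), i ≤ j → G.degree (e j) ≤ G.degree (e i))
    (k : ℕ) (C : Finset V) (hCcard : C.card = k) (hCne : C.Nonempty)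
    (hmax : ∀ C' : Finset V, C'.card = k → cov G α C' ≤ cov G α C)
    (hlex : ∀ C' : Finset V, C'.card = k → cov G α C' = cov G α C → C' ≠ C →
      List.Lex (· < ·) ((C.image e.symm).sort (· ≤ ·)) ((C'.image e.symm).sort (· ≤ ·)))
    (j : Fin (Fintype.card V)) (hj : j = (C.image e.symm).max' (hCne.image e.symm)) :
    ∀ i : Fin (Fintype.card V), i ≤ j → e i ∈ C ∨ ∃ u ∈ C, G.Adj (e i) u := by
  intro i hij
  by_contra hcon
  push_neg at hcon
  obtain ⟨hiC, hnoadj⟩ := hcon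
  -- e j ∈ C
  have hjmem : j ∈ C.image e.symm := hj ▸ Finset.max'_mem _ _
  have hjC : e j ∈ C := by
    obtain ⟨c, hc, hcj⟩ := Finset.mem_image.mp hjmem
    rwa [show e j = c by rw [← hcj]; simp]
  have hij_ne : i ≠ j := fun h => hiC (h ▸ hjC)
  have hvij : e i ≠ e j := fun h => hij_ne (e.injective h)
  -- the swap set
  set S := C.erase (e j) with hS
  have hviS : e i ∉ S := fun h => hiC (Finset.mem_of_mem_erase h)
  set C' : Finset V := insert (e i) S with hC'
  have hC'card : C'.card = k := by
    rw [hC', Finset.card_insert_of_notMem hviS, hS, Finset.card_erase_of_mem hjC, hCcard]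
    have : 1 ≤ k := hCcard ▸ Finset.card_pos.mpr hCne
    omega
  -- degree sums
  have hsumC : ∑ v ∈ C, G.degree v = G.degree (e j) + ∑ v ∈ S, G.degree v :=
    (Finset.add_sum_erase C _ hjC).symm
  have hsumC' : ∑ v ∈ C', G.degree v = G.degree (e i) + ∑ v ∈ S, G.degree v := by
    rw [hC', Finset.sum_insert hviS]
  have hdeg : G.degree (e j) ≤ G.degree (e i) := hsorted i j hij
  -- mIn comparisons
  have hmInC' : mIn G C' = mIn G S :=
    mIn_insert_no_adj G hviS (fun u hu => hnoadj u (Finset.mem_of_mem_erase hu))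
  have hmIn_le : mIn G C' ≤ mIn G C := hmInC' ▸ mIn_mono G (Finset.erase_subset _ _)
  -- cov comparison
  have hcovle : cov G α C ≤ cov G α C' := by
    rw [cov_eq, cov_eq]
    have h1 : ((∑ v ∈ C, G.degree v : ℕ) : ℝ) ≤ ((∑ v ∈ C', G.degree v : ℕ) : ℝ) := by
      exact_mod_cast hsumC ▸ hsumC' ▸ Nat.add_le_add_right hdeg _
    have h2 : ((mIn G C' : ℕ) : ℝ) ≤ ((mIn G C : ℕ) : ℝ) := by exact_mod_cast hmIn_le
    have h3 : α * ((∑ v ∈ C, G.degree v : ℕ) : ℝ) ≤ α * ((∑ v ∈ C', G.degree v : ℕ) : ℝ) :=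
      mul_le_mul_of_nonneg_left h1 (by linarith)
    have h4 : (1 - 3 * α) * ((mIn G C : ℕ) : ℝ) ≤ (1 - 3 * α) * ((mIn G C' : ℕ) : ℝ) :=
      mul_le_mul_of_nonpos_left h2 (by linarith)
    linarith
  have hcoveq : cov G α C' = cov G α C := le_antisymm (hmax C' hC'card) hcovle
  have hne : C' ≠ C := by
    intro h
    exact hiC (h ▸ Finset.mem_insert_self (e i) S)
  have HL := hlex C' hC'card hcoveq hne
  -- index images
  set T : Finset (Fin (Fintype.card V)) := (C.image e.symm).erase j with hT
  have himgC : C.image e.symm = insert j T := by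
    rw [hT, Finset.insert_erase hjmem]
  have himgC' : C'.image e.symm = insert i T := by
    rw [hC', Finset.image_insert, hS, Finset.image_erase e.symm.injective,
      Equiv.symm_apply_apply, Equiv.symm_apply_apply, hT]
  have hiT : i ∉ T := by
    intro h
    have : i ∈ C.image e.symm := Finset.mem_of_mem_erase h
    obtain ⟨c, hc, hci⟩ := Finset.mem_image.mp this
    exact hiC (by rwa [show e i = c by rw [← hci]; simp])
  have hjT : j ∉ T := Finset.notMem_erase _ _
  -- lex comparison: sort (insert i T) < sort (insert j T)
  have HL2 : List.Lex (· < ·) ((C'.image e.symm).sort (· ≤ ·))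
      ((C.image e.symm).sort (· ≤ ·)) := by
    rw [himgC, himgC']
    have hlen : ((insert i T).sort (· ≤ ·)).length = ((insert j T).sort (· ≤ ·)).length := by
      rw [Finset.length_sort, Finset.length_sort, Finset.card_insert_of_notMem hiT,
        Finset.card_insert_of_notMem hjT]
    have hxin : i ∈ (insert i T).sort (· ≤ ·) := by
      rw [Finset.mem_sort]; exact Finset.mem_insert_self _ _
    have hxout : i ∉ (insert j T).sort (· ≤ ·) := by
      rw [Finset.mem_sort]
      intro h
      rcases Finset.mem_insert.mp h with h | h
      · exact hij_ne h
      · exact hiT h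
    refine lex_helper _ _ (List.sortedLT_iff_pairwise.mp (Finset.sortedLT_sort _)) (List.sortedLT_iff_pairwise.mp (Finset.sortedLT_sort _)) hlen i hxin hxout
      fun y hy => ?_
    rw [Finset.mem_sort, Finset.mem_sort, Finset.mem_insert, Finset.mem_insert]
    constructor
    · rintro (rfl | h)
      · exact absurd rfl hy.ne
      · exact Or.inr h
    · rintro (rfl | h)
      · exact absurd (lt_of_lt_of_le hy hij) (lt_irrefl _)
      · exact Or.inr h
  exact (List.Lex.asymm (· < ·)).asymm _ _ HL HL2
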